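/- There exist no nonnegative reals λ₁, λ₂ with λ₁ e_{j} + λ₂ e_{k} = u for odd n and any j, k, but for odd n and suitable distinct j₁, j₂, j₃, the coefficients in the 3-effect measurement decomposition of u satisfy λ_i ≥ δ_n > 0 for some constant δ_n depending only on n, with δ_n → 0 as n → ∞; in particular, taking j₁ = 0, j₃ = (n+1)/2, and j₂ = (n±1)/4 (whichever is an integer), the smallest coefficient tends to 0 as n → ∞. -/

import Mathlib

open Real
open Filter

noncomputable def rn (n : ℕ) : ℝ := Real.sqrt (1 / Real.cos (π / n))

noncomputable def ωst (n : ℕ) (i : ℤ) : Fin 3 → ℝ :=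
  ![rn n * Real.cos (2 * π * (i : ℝ) / n), rn n * Real.sin (2 * π * (i : ℝ) / n), 1]

noncomputable def eEv (n : ℕ) (j : ℤ) : Fin 3 → ℝ :=
  ![rn n * Real.cos ((2 * (j : ℝ) - 1) * π / n) / 2,
    rn n * Real.sin ((2 * (j : ℝ) - 1) * π / n) / 2, 1 / 2]

noncomputable def eOd (n : ℕ) (j : ℤ) : Fin 3 → ℝ :=
  (1 / (1 + rn n ^ 2)) •
    ![rn n * Real.cos (2 * π * (j : ℝ) / n), rn n * Real.sin (2 * π * (j : ℝ) / n), 1]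

noncomputable def ip (v w : Fin 3 → ℝ) : ℝ := v 0 * w 0 + v 1 * w 1 + v 2 * w 2

noncomputable def uE : Fin 3 → ℝ := ![0, 0, 1]

lemma sin_ge_aux {n : ℕ} (hn : 3 ≤ n) {x : ℝ} (h1 : π / n ≤ x) (h2 : x ≤ π - π / n) :
    Real.sin (π / n) ≤ Real.sin x := by
  have hn0 : (0:ℝ) < n := by positivity
  have hpn : 0 < π / n := by positivity
  have hle : π / n ≤ π / 2 := by
    apply div_le_div_of_nonneg_left pi_pos.le two_pos
    exact_mod_cast by omega
  rcases le_or_gt x (π / 2) with hx | hx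
  · exact sin_le_sin_of_le_of_le_pi_div_two (by linarith) hx h1
  · rw [← Real.sin_pi_sub x]
    exact sin_le_sin_of_le_of_le_pi_div_two (by linarith) (by linarith) (by linarith)

lemma sin_lb' {n : ℕ} (hn : 3 ≤ n) (hodd : Odd n) {d : ℤ} (hd : ¬ (n:ℤ) ∣ d) :
    Real.sin (π / n) ≤ |Real.sin (2 * π * (d:ℝ) / n)| := by
  have hn0 : (0:ℝ) < n := by positivity
  have hcop : IsCoprime (n:ℤ) 2 :=
    Int.isCoprime_iff_gcd_eq_one.mpr (by simpa [Int.gcd] using Nat.coprime_two_right.mpr hodd)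
  have hnd2 : ¬ (n:ℤ) ∣ 2 * d := fun h => hd (hcop.dvd_of_dvd_mul_left h)
  set k : ℤ := (2 * d) % (n:ℤ) with hk
  set q : ℤ := (2 * d) / (n:ℤ) with hq
  have hdec : 2 * d = (n:ℤ) * q + k := (Int.mul_ediv_add_emod (2*d) n).symm
  have hnz : (n:ℤ) ≠ 0 := by exact_mod_cast (by omega : n ≠ 0)
  have hk0 : 0 < k := by
    rcases (Int.emod_nonneg (2*d) hnz).lt_or_eq with h | h
    · exact h
    · exact absurd (Int.dvd_of_emod_eq_zero h.symm) hnd2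
  have hkn : k < (n:ℤ) := Int.emod_lt_of_pos _ (by exact_mod_cast (by omega : 0 < n))
  have hdecR : 2 * (d:ℝ) = (n:ℝ) * q + k := by exact_mod_cast hdec
  have harg : 2 * π * (d:ℝ) / n = (k:ℝ) * π / n + q * π := by
    field_simp
    linear_combination hdecR
  rw [harg, Real.sin_add_int_mul_pi, abs_mul]
  have habs1 : |((-1:ℝ))^q| = 1 := by
    rcases Int.even_or_odd q with h | h
    · rw [h.neg_one_zpow, abs_one]
    · rw [h.neg_one_zpow, abs_neg, abs_one]
  rw [habs1, one_mul]
  have hk1 : (1:ℝ) ≤ (k:ℝ) := by exact_mod_cast hk0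
  have hkn' : (k:ℝ) ≤ (n:ℝ) - 1 := by
    have : (k:ℤ) ≤ (n:ℤ) - 1 := by omega
    exact_mod_cast this
  have h1 : π / n ≤ (k:ℝ) * π / n := by
    apply div_le_div_of_nonneg_right ?_ hn0.le
    nlinarith [pi_pos]
  have h2 : (k:ℝ) * π / n ≤ π - π / n := by
    rw [le_sub_iff_add_le, ← add_div, div_le_iff₀ hn0]
    nlinarith [mul_le_mul_of_nonneg_right hkn' pi_pos.le]
  have := sin_ge_aux hn h1 h2
  rwa [abs_of_nonneg]
  apply Real.sin_nonneg_of_nonneg_of_le_pi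
  · positivity
  · rw [div_le_iff₀ hn0]
    nlinarith [mul_le_mul_of_nonneg_right hkn' pi_pos.le, pi_pos]

lemma rn_pos {n : ℕ} (hn : 3 ≤ n) : 0 < rn n := by
  have hn0 : (0:ℝ) < n := by positivity
  have h1 : π / n < π / 2 := by
    apply div_lt_div_of_pos_left pi_pos two_pos
    exact_mod_cast by omega
  have h2 : 0 < Real.cos (π / n) :=
    Real.cos_pos_of_mem_Ioo ⟨by nlinarith [pi_pos, div_pos pi_pos hn0], h1⟩
  exact Real.sqrt_pos.mpr (by positivity)

set_option maxHeartbeats 1000000 in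
lemma coeff_bound (n : ℕ) (hodd : Odd n) (hn : 3 ≤ n) (j₁ j₂ j₃ : ℤ) (l₁ l₂ l₃ : ℝ)
    (hl₁ : 0 ≤ l₁)
    (hd : ¬ (n:ℤ) ∣ (j₃ - j₂))
    (h0 : l₁ * (rn n * Real.cos (2 * π * (j₁:ℝ) / n)) + l₂ * (rn n * Real.cos (2 * π * (j₂:ℝ) / n))
        + l₃ * (rn n * Real.cos (2 * π * (j₃:ℝ) / n)) = 0)
    (h1 : l₁ * (rn n * Real.sin (2 * π * (j₁:ℝ) / n)) + l₂ * (rn n * Real.sin (2 * π * (j₂:ℝ) / n))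
        + l₃ * (rn n * Real.sin (2 * π * (j₃:ℝ) / n)) = 0)
    (h2 : l₁ + l₂ + l₃ = 1 + rn n ^ 2) :
    Real.sin (π / n) / 3 ≤ l₁ := by
  have hn0 : (0:ℝ) < n := by positivity
  have hr : 0 < rn n := rn_pos hn
  set c1 := Real.cos (2 * π * (j₁:ℝ) / n)
  set s1 := Real.sin (2 * π * (j₁:ℝ) / n)
  set c2 := Real.cos (2 * π * (j₂:ℝ) / n)
  set s2 := Real.sin (2 * π * (j₂:ℝ) / n)
  set c3 := Real.cos (2 * π * (j₃:ℝ) / n)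
  set s3 := Real.sin (2 * π * (j₃:ℝ) / n)
  have hc : l₁ * c1 + l₂ * c2 + l₃ * c3 = 0 := by
    have h : rn n * (l₁ * c1 + l₂ * c2 + l₃ * c3) = 0 := by linear_combination h0
    exact (mul_eq_zero.mp h).resolve_left hr.ne'
  have hs : l₁ * s1 + l₂ * s2 + l₃ * s3 = 0 := by
    have h : rn n * (l₁ * s1 + l₂ * s2 + l₃ * s3) = 0 := by linear_combination h1
    exact (mul_eq_zero.mp h).resolve_left hr.ne'
  have hkey : l₁ * ((s2 * c1 - c2 * s1) + (s3 * c2 - c3 * s2) + (s1 * c3 - c1 * s3))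
      = (1 + rn n ^ 2) * (s3 * c2 - c3 * s2) := by
    linear_combination (s2 - s3) * hc + (c3 - c2) * hs + (s3 * c2 - c3 * s2) * h2
  have e32 : s3 * c2 - c3 * s2 = Real.sin (2 * π * ((j₃ - j₂ : ℤ):ℝ) / n) := by
    rw [show 2 * π * ((j₃ - j₂ : ℤ):ℝ) / n = 2 * π * (j₃:ℝ)/n - 2 * π * (j₂:ℝ)/n by push_cast; ring,
      Real.sin_sub]
  have e21 : s2 * c1 - c2 * s1 = Real.sin (2 * π * (j₂:ℝ)/n - 2 * π * (j₁:ℝ)/n) :=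
    (Real.sin_sub _ _).symm
  have e13 : s1 * c3 - c1 * s3 = Real.sin (2 * π * (j₁:ℝ)/n - 2 * π * (j₃:ℝ)/n) :=
    (Real.sin_sub _ _).symm
  have habs : ∀ x : ℝ, |Real.sin x| ≤ 1 := fun x =>
    abs_le.mpr ⟨Real.neg_one_le_sin x, Real.sin_le_one x⟩
  have hSg : |(s2 * c1 - c2 * s1) + (s3 * c2 - c3 * s2) + (s1 * c3 - c1 * s3)| ≤ 3 := by
    calc |(s2 * c1 - c2 * s1) + (s3 * c2 - c3 * s2) + (s1 * c3 - c1 * s3)|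
        ≤ |(s2 * c1 - c2 * s1) + (s3 * c2 - c3 * s2)| + |s1 * c3 - c1 * s3| := abs_add_le _ _
      _ ≤ |s2 * c1 - c2 * s1| + |s3 * c2 - c3 * s2| + |s1 * c3 - c1 * s3| := by
          linarith [abs_add_le (s2 * c1 - c2 * s1) (s3 * c2 - c3 * s2)]
      _ ≤ 3 := by
          rw [e21, e32, e13]
          linarith [habs (2 * π * (j₂:ℝ)/n - 2 * π * (j₁:ℝ)/n),
            habs (2 * π * ((j₃ - j₂ : ℤ):ℝ) / n), habs (2 * π * (j₁:ℝ)/n - 2 * π * (j₃:ℝ)/n)]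
  have hlb := sin_lb' hn hodd hd
  have hsnn : 0 ≤ Real.sin (π / n) := by
    apply Real.sin_nonneg_of_nonneg_of_le_pi
    · positivity
    · rw [div_le_iff₀ hn0]
      nlinarith [pi_pos, mul_le_mul_of_nonneg_left (by exact_mod_cast hn : (3:ℝ) ≤ (n:ℝ)) pi_pos.le]
  have hK1 : (1:ℝ) ≤ 1 + rn n ^ 2 := by nlinarith [sq_nonneg (rn n)]
  have hchain : Real.sin (π / n) ≤ 3 * l₁ := by
    have hx1 : |l₁ * ((s2 * c1 - c2 * s1) + (s3 * c2 - c3 * s2) + (s1 * c3 - c1 * s3))|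
        = l₁ * |(s2 * c1 - c2 * s1) + (s3 * c2 - c3 * s2) + (s1 * c3 - c1 * s3)| := by
      rw [abs_mul, abs_of_nonneg hl₁]
    have hx2 : |l₁ * ((s2 * c1 - c2 * s1) + (s3 * c2 - c3 * s2) + (s1 * c3 - c1 * s3))|
        = (1 + rn n ^ 2) * |Real.sin (2 * π * ((j₃ - j₂ : ℤ):ℝ) / n)| := by
      rw [hkey, e32, abs_mul, abs_of_pos (by positivity : (0:ℝ) < 1 + rn n ^ 2)]
    have step1 : Real.sin (π / n) ≤ (1 + rn n ^ 2) * |Real.sin (2 * π * ((j₃ - j₂ : ℤ):ℝ) / n)| := by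
      calc Real.sin (π / n) = 1 * Real.sin (π / n) := (one_mul _).symm
        _ ≤ (1 + rn n ^ 2) * |Real.sin (2 * π * ((j₃ - j₂ : ℤ):ℝ) / n)| :=
            mul_le_mul hK1 hlb hsnn (by positivity)
    have step2 : (1 + rn n ^ 2) * |Real.sin (2 * π * ((j₃ - j₂ : ℤ):ℝ) / n)| ≤ l₁ * 3 := by
      rw [← hx2, hx1]
      exact mul_le_mul_of_nonneg_left hSg hl₁
    linarith
  linarith

lemma base_lim (a : ℝ) :
    Tendsto (fun m : ℕ => ((m : ℝ) + a) / (2 * (m : ℝ) + 1)) atTop (nhds (1/2)) := by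
  have h1 : Tendsto (fun m : ℕ => (2 * (m : ℝ) + 1)) atTop atTop := by
    apply tendsto_atTop_add_const_right
    exact (tendsto_natCast_atTop_atTop (R := ℝ)).const_mul_atTop two_pos
  have h2 : Tendsto (fun m : ℕ => (2 * (m : ℝ) + 1)⁻¹) atTop (nhds 0) :=
    h1.inv_tendsto_atTop
  have h3 : Tendsto (fun m : ℕ => 1/2 + (a - 1/2) * (2 * (m : ℝ) + 1)⁻¹) atTop
      (nhds (1/2 + (a - 1/2) * 0)) := tendsto_const_nhds.add (h2.const_mul _)
  have he : ∀ m : ℕ, ((m : ℝ) + a) / (2 * (m : ℝ) + 1)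
      = 1/2 + (a - 1/2) * (2 * (m : ℝ) + 1)⁻¹ := by
    intro m
    have h : (2 * (m : ℝ) + 1) ≠ 0 := by positivity
    field_simp
    ring
  simp only [he]
  simpa using h3


-- Part 1 core
set_option maxHeartbeats 1000000 in
lemma part1 (n : ℕ) (hodd : Odd n) (hn : 3 ≤ n) (j k : ℤ) (l₁ l₂ : ℝ)
    (hl₁ : 0 ≤ l₁) (hl₂ : 0 ≤ l₂) : l₁ • eOd n j + l₂ • eOd n k ≠ uE := by
  intro heq
  have hn0 : (0:ℝ) < n := by positivity
  have hr : 0 < rn n := rn_pos hn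
  have hKne : (1 + rn n ^ 2) ≠ 0 := by positivity
  have h0 := congr_fun heq 0
  have h1 := congr_fun heq 1
  have h2 := congr_fun heq 2
  simp [eOd, uE] at h0 h1 h2
  field_simp at h0 h1 h2
  set c1 := Real.cos (2 * π * (j:ℝ) / n)
  set s1 := Real.sin (2 * π * (j:ℝ) / n)
  set c2 := Real.cos (2 * π * (k:ℝ) / n)
  set s2 := Real.sin (2 * π * (k:ℝ) / n)
  have hc : l₁ * c1 + l₂ * c2 = 0 := by
    have h : rn n * (l₁ * c1 + l₂ * c2) = 0 := by linear_combination h0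
    exact (mul_eq_zero.mp h).resolve_left hr.ne'
  have hs : l₁ * s1 + l₂ * s2 = 0 := by
    have h : rn n * (l₁ * s1 + l₂ * s2) = 0 := by linear_combination h1
    exact (mul_eq_zero.mp h).resolve_left hr.ne'
  have p1 : s1 ^ 2 + c1 ^ 2 = 1 := Real.sin_sq_add_cos_sq _
  have p2 : s2 ^ 2 + c2 ^ 2 = 1 := Real.sin_sq_add_cos_sq _
  have hsq : l₁ ^ 2 + l₂ ^ 2 + 2 * l₁ * l₂ * (c1 * c2 + s1 * s2) = 0 := by
    linear_combination (l₁ * c1 + l₂ * c2) * hc + (l₁ * s1 + l₂ * s2) * hs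
      - l₁ ^ 2 * p1 - l₂ ^ 2 * p2
  have hCge : -1 ≤ c1 * c2 + s1 * s2 := by
    rw [← Real.cos_sub]
    exact Real.neg_one_le_cos _
  have hr2 : (0:ℝ) ≤ rn n ^ 2 := sq_nonneg _
  have hl1p : 0 < l₁ := by
    rcases hl₁.lt_or_eq with h | h
    · exact h
    · exfalso
      rw [← h] at hsq h2
      have hl2 : l₂ ^ 2 = 0 := by linear_combination hsq
      have : l₂ = 0 := by nlinarith [hl2]
      nlinarith [hr2]
  have hl2p : 0 < l₂ := by
    rcases hl₂.lt_or_eq with h | h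
    · exact h
    · exfalso
      rw [← h] at hsq h2
      have hl1 : l₁ ^ 2 = 0 := by linear_combination hsq
      have : l₁ = 0 := by nlinarith [hl1]
      nlinarith [hr2]
  clear heq h0 h1
  have hCle : c1 * c2 + s1 * s2 ≤ -1 := by
    nlinarith [hsq, mul_pos hl1p hl2p, sq_nonneg (l₁ - l₂)]
  have hC : Real.cos (2 * π * (j:ℝ) / n - 2 * π * (k:ℝ) / n) = -1 := by
    rw [Real.cos_sub]; linarith [hCge, hCle]
  obtain ⟨t, ht⟩ := Real.cos_eq_neg_one_iff.mp hC
  have hnne : (n:ℝ) ≠ 0 := hn0.ne'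
  have ht' : (π + (t:ℝ) * (2 * π)) * n = 2 * π * (j:ℝ) - 2 * π * (k:ℝ) := by
    field_simp at ht
    linear_combination π * ht
  have h2d : (n:ℝ) * (2 * t + 1) = 2 * (j - k : ℤ) := by
    apply mul_left_cancel₀ Real.pi_ne_zero
    push_cast
    linear_combination ht'
  have h2dz : (n:ℤ) * (2 * t + 1) = 2 * (j - k) := by exact_mod_cast h2d
  have hoddm : Odd ((n:ℤ) * (2 * t + 1)) :=
    Int.odd_mul.mpr ⟨by exact_mod_cast hodd, odd_two_mul_add_one t⟩
  rw [h2dz] at hoddm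
  exact (Int.not_odd_iff_even.mpr (even_two_mul _)) hoddm

set_option maxHeartbeats 1000000 in
theorem ngon_odd_measurement_coefficients :
    (∀ (n : ℕ), Odd n → 3 ≤ n → ∀ (j k : ℤ) (l₁ l₂ : ℝ),
        0 ≤ l₁ → 0 ≤ l₂ → l₁ • eOd n j + l₂ • eOd n k ≠ uE) ∧
    (∀ (n : ℕ), Odd n → 3 ≤ n → ∃ δ : ℝ, 0 < δ ∧
        ∀ (j₁ j₂ j₃ : ℤ) (l₁ l₂ l₃ : ℝ),
          ¬ j₁ ≡ j₂ [ZMOD (n : ℤ)] → ¬ j₂ ≡ j₃ [ZMOD (n : ℤ)] →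
          ¬ j₃ ≡ j₁ [ZMOD (n : ℤ)] →
          0 ≤ l₁ → 0 ≤ l₂ → 0 ≤ l₃ →
          l₁ • eOd n j₁ + l₂ • eOd n j₂ + l₃ • eOd n j₃ = uE →
          δ ≤ l₁ ∧ δ ≤ l₂ ∧ δ ≤ l₃) ∧
    Filter.Tendsto (fun m : ℕ =>
        let n : ℝ := 2 * (m : ℝ) + 1
        let j₁ : ℝ := 0
        let j₃ : ℝ := (m : ℝ) + 1
        let j₂ : ℝ := if Even m then (m : ℝ) / 2 else ((m : ℝ) + 1) / 2
        min (1 - Real.cot ((j₁ - j₂) * π / n) * Real.cot ((j₃ - j₁) * π / n))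
          (min (1 - Real.cot ((j₁ - j₂) * π / n) * Real.cot ((j₂ - j₃) * π / n))
               (1 - Real.cot ((j₂ - j₃) * π / n) * Real.cot ((j₃ - j₁) * π / n))))
      Filter.atTop (nhds 0) := by
  refine ⟨part1, ?_, ?_⟩
  · intro n hodd hn
    have hn0 : (0:ℝ) < n := by positivity
    have hlt : π / n < π := div_lt_self pi_pos (by exact_mod_cast (by omega : 1 < n))
    have hsp : 0 < Real.sin (π / n) := Real.sin_pos_of_pos_of_lt_pi (by positivity) hlt
    refine ⟨Real.sin (π / n) / 3, by positivity, ?_⟩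
    intro j₁ j₂ j₃ l₁ l₂ l₃ h12 h23 h31 hl₁ hl₂ hl₃ heq
    have hKne : (1 + rn n ^ 2) ≠ 0 := by positivity
    have h0 := congr_fun heq 0
    have h1 := congr_fun heq 1
    have h2 := congr_fun heq 2
    simp [eOd, uE] at h0 h1 h2
    field_simp at h0 h1 h2
    have d23 : ¬ (n:ℤ) ∣ (j₃ - j₂) := fun hdvd => h23 (Int.modEq_iff_dvd.mpr hdvd)
    have d31 : ¬ (n:ℤ) ∣ (j₁ - j₃) := fun hdvd => h31 (Int.modEq_iff_dvd.mpr hdvd)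
    have d12 : ¬ (n:ℤ) ∣ (j₂ - j₁) := fun hdvd => h12 (Int.modEq_iff_dvd.mpr hdvd)
    refine ⟨coeff_bound n hodd hn j₁ j₂ j₃ l₁ l₂ l₃ hl₁ d23
        (by linear_combination h0) (by linear_combination h1) (by linear_combination h2),
      coeff_bound n hodd hn j₂ j₃ j₁ l₂ l₃ l₁ hl₂ d31
        (by linear_combination h0) (by linear_combination h1) (by linear_combination h2),
      coeff_bound n hodd hn j₃ j₁ j₂ l₃ l₁ l₂ hl₃ d12
        (by linear_combination h0) (by linear_combination h1) (by linear_combination h2)⟩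
  · simp only [Real.cot_eq_cos_div_sin]
    set J : ℕ → ℝ := fun m => if Even m then (m : ℝ) / 2 else ((m : ℝ) + 1) / 2 with hJ
    have hJlb : ∀ m : ℕ, (m : ℝ) / 2 ≤ J m := by
      intro m; by_cases h : Even m <;> simp [hJ, h] <;> linarith [Nat.cast_nonneg (α := ℝ) m]
    have hJub : ∀ m : ℕ, J m ≤ ((m : ℝ) + 1) / 2 := by
      intro m; by_cases h : Even m <;> simp [hJ, h] <;> linarith [Nat.cast_nonneg (α := ℝ) m]
    -- limit of A m = (0 - J m) * π / (2m+1)  → -(π/4)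
    have hA : Tendsto (fun m : ℕ => (0 - J m) * π / (2 * (m : ℝ) + 1)) atTop (nhds (-(π/4))) := by
      apply tendsto_of_tendsto_of_tendsto_of_le_of_le
        (g := fun m : ℕ => (-(π/2)) * (((m : ℝ) + 1) / (2 * (m : ℝ) + 1)))
        (h := fun m : ℕ => (-(π/2)) * (((m : ℝ) + 0) / (2 * (m : ℝ) + 1)))
      · have := (base_lim 1).const_mul (-(π/2))
        convert this using 1; ring_nf
      · have := (base_lim 0).const_mul (-(π/2))
        convert this using 1; ring_nf
      · intro m
        have hd : (0:ℝ) < 2 * (m : ℝ) + 1 := by positivity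
        dsimp only
        rw [show (-(π/2)) * (((m : ℝ) + 1) / (2 * (m : ℝ) + 1)) = (-(((m:ℝ)+1)/2) * π) / (2 * (m : ℝ) + 1) by ring]
        apply div_le_div_of_nonneg_right ?_ hd.le
        nlinarith [pi_pos, hJub m]
      · intro m
        have hd : (0:ℝ) < 2 * (m : ℝ) + 1 := by positivity
        dsimp only
        rw [show (-(π/2)) * (((m : ℝ) + 0) / (2 * (m : ℝ) + 1)) = (-((m:ℝ)/2) * π) / (2 * (m : ℝ) + 1) by ring]
        apply div_le_div_of_nonneg_right ?_ hd.le
        nlinarith [pi_pos, hJlb m]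
    -- limit of C m = (J m - (m+1)) * π / (2m+1) → -(π/4)
    have hC : Tendsto (fun m : ℕ => (J m - ((m : ℝ) + 1)) * π / (2 * (m : ℝ) + 1)) atTop (nhds (-(π/4))) := by
      apply tendsto_of_tendsto_of_tendsto_of_le_of_le
        (g := fun m : ℕ => (-(π/2)) * (((m : ℝ) + 2) / (2 * (m : ℝ) + 1)))
        (h := fun m : ℕ => (-(π/2)) * (((m : ℝ) + 1) / (2 * (m : ℝ) + 1)))
      · have := (base_lim 2).const_mul (-(π/2))
        convert this using 1; ring_nf
      · have := (base_lim 1).const_mul (-(π/2))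
        convert this using 1; ring_nf
      · intro m
        have hd : (0:ℝ) < 2 * (m : ℝ) + 1 := by positivity
        dsimp only
        rw [show (-(π/2)) * (((m : ℝ) + 2) / (2 * (m : ℝ) + 1)) = ((-(((m:ℝ)+2)/2)) * π) / (2 * (m : ℝ) + 1) by ring]
        apply div_le_div_of_nonneg_right ?_ hd.le
        nlinarith [pi_pos, hJlb m]
      · intro m
        have hd : (0:ℝ) < 2 * (m : ℝ) + 1 := by positivity
        dsimp only
        rw [show (-(π/2)) * (((m : ℝ) + 1) / (2 * (m : ℝ) + 1)) = ((-(((m:ℝ)+1)/2)) * π) / (2 * (m : ℝ) + 1) by ring]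
        apply div_le_div_of_nonneg_right ?_ hd.le
        nlinarith [pi_pos, hJub m]
    -- limit of B m = ((m+1) - 0) * π / (2m+1) → π/2
    have hB : Tendsto (fun m : ℕ => (((m : ℝ) + 1) - 0) * π / (2 * (m : ℝ) + 1)) atTop (nhds (π/2)) := by
      have := (base_lim 1).const_mul π
      have he : ∀ m : ℕ, (((m : ℝ) + 1) - 0) * π / (2 * (m : ℝ) + 1)
          = π * (((m : ℝ) + 1) / (2 * (m : ℝ) + 1)) := fun m => by ring
      rw [show π/2 = π * (1/2) by ring]
      simp only [he]
      exact this
    -- cot limits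
    have hsA : Real.sin (-(π/4)) ≠ 0 := by
      rw [Real.sin_neg, Real.sin_pi_div_four]
      exact neg_ne_zero.mpr (by positivity : (0:ℝ) < Real.sqrt 2 / 2).ne'
    have hsB : Real.sin (π/2) ≠ 0 := by rw [Real.sin_pi_div_two]; norm_num
    have hvA : Real.cos (-(π/4)) / Real.sin (-(π/4)) = -1 := by
      rw [Real.cos_neg, Real.sin_neg, Real.cos_pi_div_four, Real.sin_pi_div_four, div_neg,
        div_self (by positivity : (Real.sqrt 2 / 2) ≠ 0)]
    have hvB : Real.cos (π/2) / Real.sin (π/2) = 0 := by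
      rw [Real.cos_pi_div_two, zero_div]
    have cotA : Tendsto (fun m : ℕ => Real.cos ((0 - J m) * π / (2 * (m : ℝ) + 1))
        / Real.sin ((0 - J m) * π / (2 * (m : ℝ) + 1))) atTop (nhds (-1)) := by
      have := ((Real.continuous_cos.tendsto _).comp hA).div ((Real.continuous_sin.tendsto _).comp hA) hsA
      rwa [hvA] at this
    have cotC : Tendsto (fun m : ℕ => Real.cos ((J m - ((m : ℝ) + 1)) * π / (2 * (m : ℝ) + 1))
        / Real.sin ((J m - ((m : ℝ) + 1)) * π / (2 * (m : ℝ) + 1))) atTop (nhds (-1)) := by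
      have := ((Real.continuous_cos.tendsto _).comp hC).div ((Real.continuous_sin.tendsto _).comp hC) hsA
      rwa [hvA] at this
    have cotB : Tendsto (fun m : ℕ => Real.cos ((((m : ℝ) + 1) - 0) * π / (2 * (m : ℝ) + 1))
        / Real.sin ((((m : ℝ) + 1) - 0) * π / (2 * (m : ℝ) + 1))) atTop (nhds 0) := by
      have := ((Real.continuous_cos.tendsto _).comp hB).div ((Real.continuous_sin.tendsto _).comp hB) hsB
      rwa [hvB] at this
    have hT1 := tendsto_const_nhds (x := (1:ℝ)) (f := atTop (α := ℕ)) |>.sub (cotA.mul cotB)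
    have hT2 := tendsto_const_nhds (x := (1:ℝ)) (f := atTop (α := ℕ)) |>.sub (cotA.mul cotC)
    have hT3 := tendsto_const_nhds (x := (1:ℝ)) (f := atTop (α := ℕ)) |>.sub (cotC.mul cotB)
    convert hT1.min (hT2.min hT3) using 2 <;> norm_num
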